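/- Let U and V be vector spaces over a field K of characteristic zero, in duality via a bilinear form. Then a Laplace pairing on the joint tensor algebra T(U,V) = T(U) ⊗ T(V) compatible with the duality exists and is unique. Moreover, it is symmetric: (a | b) = (b | a) for all a, b ∈ T(U,V). -/

import Mathlib

open TensorProduct

set_option linter.unusedSectionVars false
set_option linter.unusedVariables false
set_option synthInstance.maxHeartbeats 1000000
set_option maxHeartbeats 1000000



noncomputable section

variable (K : Type) [Field K] [CharZero K]
variable (U V : Type) [AddCommGroup U] [Module K U] [AddCommGroup V] [Module K V]

/-- The comultiplication of the tensor algebra, the algebra homomorphism with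
`Δ(x) = 1 ⊗ x + x ⊗ 1` for `x ∈ U`. -/
def TAcomul : TensorAlgebra K U →ₐ[K] TensorAlgebra K U ⊗[K] TensorAlgebra K U :=
  TensorAlgebra.lift K
    ((TensorProduct.mk K (TensorAlgebra K U) (TensorAlgebra K U) 1
      + (TensorProduct.mk K (TensorAlgebra K U) (TensorAlgebra K U)).flip 1) ∘ₗ TensorAlgebra.ι K)

/-- The joint tensor algebra `T(U,V) = T(U) ⊗ T(V)`. -/
abbrev JT := TensorAlgebra K U ⊗[K] TensorAlgebra K V

/-- The comultiplication of the joint tensor algebra (tensor product Hopf structure). -/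
def JTcomul : JT K U V →ₗ[K] JT K U V ⊗[K] JT K U V :=
  (TensorProduct.tensorTensorTensorComm K (TensorAlgebra K U) (TensorAlgebra K U)
      (TensorAlgebra K V) (TensorAlgebra K V)).toLinearMap ∘ₗ
    TensorProduct.map (TAcomul K U).toLinearMap (TAcomul K V).toLinearMap

/-- `a ↦ a ⊗ 1 : T(U) → T(U,V)`. -/
def inclU : TensorAlgebra K U →ₗ[K] JT K U V :=
  (TensorProduct.mk K (TensorAlgebra K U) (TensorAlgebra K V)).flip 1

/-- `b ↦ 1 ⊗ b : T(V) → T(U,V)`. -/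
def inclV : TensorAlgebra K V →ₗ[K] JT K U V :=
  TensorProduct.mk K (TensorAlgebra K U) (TensorAlgebra K V) 1

variable (B : U →ₗ[K] V →ₗ[K] K)

/-- A Laplace pairing on the joint tensor algebra `T(U,V)`, compatible with the duality `B`:
a symmetric bilinear form satisfying `(a | bc) = Σ (a₍₁₎ | b) (a₍₂₎ | c)` together with the
compatibility conditions on generators. -/
structure IsLaplacePairing (Lp : JT K U V →ₗ[K] JT K U V →ₗ[K] K) : Prop where
  symm : ∀ a b, Lp a b = Lp b a
  split : ∀ a b c, Lp a (b * c)
    = TensorProduct.lift ((LinearMap.mul K K).compl₁₂ (Lp.flip b) (Lp.flip c)) (JTcomul K U V a)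
  unit_unit : Lp 1 1 = 1
  vu : ∀ (x : U) (y : V),
    Lp (inclV K U V (TensorAlgebra.ι K y)) (inclU K U V (TensorAlgebra.ι K x)) = B x y
  uv : ∀ (x : U) (y : V),
    Lp (inclU K U V (TensorAlgebra.ι K x)) (inclV K U V (TensorAlgebra.ι K y)) = B x y
  uu : ∀ x₁ x₂ : U,
    Lp (inclU K U V (TensorAlgebra.ι K x₁)) (inclU K U V (TensorAlgebra.ι K x₂)) = 0
  vv : ∀ y₁ y₂ : V,
    Lp (inclV K U V (TensorAlgebra.ι K y₁)) (inclV K U V (TensorAlgebra.ι K y₂)) = 0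
  u_one : ∀ x : U, Lp (inclU K U V (TensorAlgebra.ι K x)) 1 = 0
  one_u : ∀ x : U, Lp 1 (inclU K U V (TensorAlgebra.ι K x)) = 0
  one_v : ∀ y : V, Lp 1 (inclV K U V (TensorAlgebra.ι K y)) = 0
  v_one : ∀ y : V, Lp (inclV K U V (TensorAlgebra.ι K y)) 1 = 0

section Aux

variable (W : Type) [AddCommGroup W] [Module K W]

local instance auxOp : Module Kᵐᵒᵖ W := Module.compHom _ ((RingHom.id K).fromOpposite mul_comm)
local instance auxCS : IsCentralScalar K W := ⟨fun _ _ => rfl⟩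

/-- The counit of the tensor algebra. -/
def TAcounit : TensorAlgebra K W →ₐ[K] K := TensorAlgebra.lift K 0

@[simp] lemma TAcounit_ι (x : W) : TAcounit K W (TensorAlgebra.ι K x) = 0 := by
  simp [TAcounit]

/-- Projection to degree one. -/
def TAproj : TensorAlgebra K W →ₗ[K] W :=
  (TrivSqZeroExt.sndHom K W).comp (TensorAlgebra.toTrivSqZeroExt (R := K) (M := W)).toLinearMap

@[simp] lemma TAproj_ι (x : W) : TAproj K W (TensorAlgebra.ι K x) = x := by
  simp [TAproj]

@[simp] lemma TAproj_one : TAproj K W (1 : TensorAlgebra K W) = 0 := by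
  simp [TAproj]

lemma fst_toTSE (a : TensorAlgebra K W) :
    (TensorAlgebra.toTrivSqZeroExt (R := K) (M := W) a).fst = TAcounit K W a := by
  have h : (TrivSqZeroExt.fstHom K K W).comp (TensorAlgebra.toTrivSqZeroExt (R := K) (M := W))
      = TAcounit K W := by
    ext x
    simp
  exact DFunLike.congr_fun h a

lemma TAproj_mul (a b : TensorAlgebra K W) :
    TAproj K W (a * b) = TAcounit K W a • TAproj K W b + TAcounit K W b • TAproj K W a := by
  simp only [TAproj, LinearMap.comp_apply, AlgHom.toLinearMap_apply, map_mul,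
    TrivSqZeroExt.sndHom_apply, TrivSqZeroExt.snd_mul, fst_toTSE]
  rw [op_smul_eq_smul]

end Aux

section Coalg

variable (W : Type) [AddCommGroup W] [Module K W]

@[simp] lemma TAcomul_ι (x : W) :
    TAcomul K W (TensorAlgebra.ι K x)
      = 1 ⊗ₜ[K] TensorAlgebra.ι K x + TensorAlgebra.ι K x ⊗ₜ[K] 1 := by
  simp [TAcomul, TensorAlgebra.lift_ι_apply]

lemma algTP_map_toLinearMap {A B C D : Type} [Ring A] [Ring B] [Ring C] [Ring D]
    [Algebra K A] [Algebra K B] [Algebra K C] [Algebra K D]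
    (f : A →ₐ[K] C) (g : B →ₐ[K] D) :
    (Algebra.TensorProduct.map f g).toLinearMap
      = TensorProduct.map f.toLinearMap g.toLinearMap := by
  apply TensorProduct.ext'
  intro a b
  simp

instance TAcoalgebra : Coalgebra K (TensorAlgebra K W) where
  comul := (TAcomul K W).toLinearMap
  counit := (TAcounit K W).toLinearMap
  coassoc := by
    have h : (Algebra.TensorProduct.assoc K K K (TensorAlgebra K W) (TensorAlgebra K W)
          (TensorAlgebra K W)).toAlgHom.comp
            ((Algebra.TensorProduct.map (TAcomul K W) (AlgHom.id K _)).comp (TAcomul K W))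
        = (Algebra.TensorProduct.map (AlgHom.id K _) (TAcomul K W)).comp (TAcomul K W) := by
      ext x
      simp [Algebra.TensorProduct.one_def, tmul_add, add_tmul]
      abel
    have h' := congrArg AlgHom.toLinearMap h
    simp only [AlgHom.comp_toLinearMap, algTP_map_toLinearMap, AlgHom.toLinearMap_id] at h'
    have hassoc : (Algebra.TensorProduct.assoc K K K (TensorAlgebra K W) (TensorAlgebra K W)
          (TensorAlgebra K W)).toAlgHom.toLinearMap
        = (TensorProduct.assoc K _ _ _).toLinearMap := by
      apply TensorProduct.ext_threefold
      intro a b c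
      rfl
    rw [hassoc] at h'
    simpa [LinearMap.rTensor, LinearMap.lTensor, LinearMap.comp_assoc] using h'
  rTensor_counit_comp_comul := by
    have h : (Algebra.TensorProduct.map (TAcounit K W) (AlgHom.id K _)).comp (TAcomul K W)
        = Algebra.TensorProduct.includeRight := by
      ext x
      simp
    have h' := congrArg AlgHom.toLinearMap h
    simp only [AlgHom.comp_toLinearMap, algTP_map_toLinearMap, AlgHom.toLinearMap_id] at h'
    show TensorProduct.map (TAcounit K W).toLinearMap LinearMap.id ∘ₗ (TAcomul K W).toLinearMap
      = TensorProduct.mk K K _ 1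
    rw [h']
    exact LinearMap.ext fun x => rfl
  lTensor_counit_comp_comul := by
    have h : (Algebra.TensorProduct.map (AlgHom.id K _) (TAcounit K W)).comp (TAcomul K W)
        = Algebra.TensorProduct.includeLeft := by
      ext x
      simp
    have h' := congrArg AlgHom.toLinearMap h
    simp only [AlgHom.comp_toLinearMap, algTP_map_toLinearMap, AlgHom.toLinearMap_id] at h'
    show TensorProduct.map LinearMap.id (TAcounit K W).toLinearMap ∘ₗ (TAcomul K W).toLinearMap
      = (TensorProduct.mk K _ K).flip 1
    rw [h']
    exact LinearMap.ext fun x => rfl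

end Coalg

section Bialg

variable (W : Type) [AddCommGroup W] [Module K W]

instance TAbialgebra : Bialgebra K (TensorAlgebra K W) :=
  Bialgebra.mk' K (TensorAlgebra K W)
    (map_one (TAcounit K W)) (fun {a b} => map_mul (TAcounit K W) a b)
    (map_one (TAcomul K W)) (fun {a b} => map_mul (TAcomul K W) a b)

end Bialg

section Conv

variable {C D : Type} [AddCommGroup C] [Module K C] [AddCommGroup D] [Module K D]

/-- `lift ((mul K K).compl₁₂ f g)` as shorthand. -/
def lm (f : C →ₗ[K] K) (g : D →ₗ[K] K) : C ⊗[K] D →ₗ[K] K :=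
  TensorProduct.lift ((LinearMap.mul K K).compl₁₂ f g)

@[simp] lemma lm_tmul (f : C →ₗ[K] K) (g : D →ₗ[K] K) (c : C) (d : D) :
    lm K f g (c ⊗ₜ[K] d) = f c * g d := rfl

lemma lm_add_left (f f' : C →ₗ[K] K) (g : D →ₗ[K] K) :
    lm K (f + f') g = lm K f g + lm K f' g := by
  apply TensorProduct.ext'; intro c d; simp [add_mul]

lemma lm_add_right (f : C →ₗ[K] K) (g g' : D →ₗ[K] K) :
    lm K f (g + g') = lm K f g + lm K f g' := by
  apply TensorProduct.ext'; intro c d; simp [mul_add]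

lemma lm_smul_left (r : K) (f : C →ₗ[K] K) (g : D →ₗ[K] K) :
    lm K (r • f) g = r • lm K f g := by
  apply TensorProduct.ext'; intro c d; simp [mul_assoc]

lemma lm_smul_right (r : K) (f : C →ₗ[K] K) (g : D →ₗ[K] K) :
    lm K f (r • g) = r • lm K f g := by
  apply TensorProduct.ext'; intro c d; simp [smul_eq_mul]; ring

lemma lm_zero_left (g : D →ₗ[K] K) : lm K (0 : C →ₗ[K] K) g = 0 := by
  apply TensorProduct.ext'; intro c d; simp

lemma lm_zero_right (f : C →ₗ[K] K) : lm K f (0 : D →ₗ[K] K) = 0 := by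
  apply TensorProduct.ext'; intro c d; simp

end Conv

section ConvRing

variable {C : Type} [AddCommGroup C] [Module K C] [Coalgebra K C]

/-- convolution product on the dual of a coalgebra -/
def cnv (f g : C →ₗ[K] K) : C →ₗ[K] K := (lm K f g) ∘ₗ Coalgebra.comul

lemma cnv_apply (f g : C →ₗ[K] K) (c : C) : cnv K f g c = lm K f g (Coalgebra.comul c) := rfl

lemma lm_cnv_left (f g h : C →ₗ[K] K) (t : C ⊗[K] C) :
    lm K (cnv K f g) h t
      = lm K (lm K f g) h ((Coalgebra.comul (R := K)).rTensor C t) := by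
  induction t with
  | zero => simp
  | tmul c d => simp [cnv_apply]
  | add s t hs ht => simp [map_add, hs, ht]

lemma lm_cnv_right (f g h : C →ₗ[K] K) (t : C ⊗[K] C) :
    lm K f (cnv K g h) t
      = lm K f (lm K g h) ((Coalgebra.comul (R := K)).lTensor C t) := by
  induction t with
  | zero => simp
  | tmul c d => simp [cnv_apply]
  | add s t hs ht => simp [map_add, hs, ht]

lemma lm_assoc (f g h : C →ₗ[K] K) (w : (C ⊗[K] C) ⊗[K] C) :
    lm K (lm K f g) h w = lm K f (lm K g h) (TensorProduct.assoc K C C C w) := by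
  induction w with
  | zero => simp
  | tmul s c =>
      induction s with
      | zero => simp
      | tmul a b => simp [mul_assoc]
      | add s t hs ht => simp [add_tmul, map_add, hs, ht]
  | add s t hs ht => simp [map_add, hs, ht]

lemma lm_counit_left (f : C →ₗ[K] K) (t : C ⊗[K] C) :
    lm K (Coalgebra.counit) f t
      = lm K LinearMap.id f ((Coalgebra.counit (R := K)).rTensor C t) := by
  induction t with
  | zero => simp
  | tmul c d => simp
  | add s t hs ht => simp [map_add, hs, ht]

lemma lm_counit_right (f : C →ₗ[K] K) (t : C ⊗[K] C) :
    lm K f (Coalgebra.counit) t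
      = lm K f LinearMap.id ((Coalgebra.counit (R := K)).lTensor C t) := by
  induction t with
  | zero => simp
  | tmul c d => simp
  | add s t hs ht => simp [map_add, hs, ht]

instance convRing : Ring (Module.Dual K C) :=
  { (inferInstance : AddCommGroup (Module.Dual K C)) with
    mul := cnv K
    one := Coalgebra.counit
    mul_assoc := fun f g h => by
      show cnv K (cnv K f g) h = cnv K f (cnv K g h)
      apply LinearMap.ext; intro c
      rw [cnv_apply, cnv_apply, lm_cnv_left, lm_cnv_right, lm_assoc]
      congr 1
      exact Coalgebra.coassoc_apply c
    one_mul := fun f => by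
      show cnv K Coalgebra.counit f = f
      apply LinearMap.ext; intro c
      rw [cnv_apply, lm_counit_left, Coalgebra.rTensor_counit_comul]
      simp
    mul_one := fun f => by
      show cnv K f Coalgebra.counit = f
      apply LinearMap.ext; intro c
      rw [cnv_apply, lm_counit_right, Coalgebra.lTensor_counit_comul]
      simp
    left_distrib := fun f g h => by
      show cnv K f (g + h) = cnv K f g + cnv K f h
      apply LinearMap.ext; intro c
      simp [cnv_apply, lm_add_right]
    right_distrib := fun f g h => by
      show cnv K (f + g) h = cnv K f h + cnv K g h
      apply LinearMap.ext; intro c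
      simp [cnv_apply, lm_add_left]
    zero_mul := fun f => by
      show cnv K 0 f = 0
      apply LinearMap.ext; intro c
      simp [cnv_apply, lm_zero_left]
    mul_zero := fun f => by
      show cnv K f 0 = 0
      apply LinearMap.ext; intro c
      simp [cnv_apply, lm_zero_right] }

lemma dual_mul_def (f g : Module.Dual K C) : f * g = cnv K f g := rfl

lemma dual_one_def : (1 : Module.Dual K C) = Coalgebra.counit := rfl

instance convAlgebra : Algebra K (Module.Dual K C) :=
  Algebra.ofModule
    (fun r f g => by
      show cnv K (r • f) g = r • cnv K f g
      apply LinearMap.ext; intro c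
      simp [cnv_apply, lm_smul_left])
    (fun r f g => by
      show cnv K f (r • g) = r • cnv K f g
      apply LinearMap.ext; intro c
      simp [cnv_apply, lm_smul_right])

end ConvRing

section Theta

variable {C D : Type} [AddCommGroup C] [Module K C] [AddCommGroup D] [Module K D]
variable [Coalgebra K C] [Coalgebra K D]

lemma comulCD (c : C) (d : D) :
    Coalgebra.comul (R := K) (c ⊗ₜ[K] d)
      = TensorProduct.tensorTensorTensorComm K C C D D
          (Coalgebra.comul (R := K) c ⊗ₜ[K] Coalgebra.comul (R := K) d) := by
  rfl

lemma lm4 (f f' : Module.Dual K C) (g g' : Module.Dual K D) (s : C ⊗[K] C) (t : D ⊗[K] D) :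
    lm K (lm K f g) (lm K f' g') (TensorProduct.tensorTensorTensorComm K C C D D (s ⊗ₜ[K] t))
      = lm K f f' s * lm K g g' t := by
  induction s with
  | zero => simp
  | tmul a b =>
      induction t with
      | zero => simp
      | tmul c d =>
          simp only [tensorTensorTensorComm_tmul, lm_tmul]
          ring
      | add y z hy hz => simp only [tmul_add, map_add, hy, hz, mul_add]
  | add y z hy hz => simp only [add_tmul, map_add, hy, hz, add_mul]

/-- the bilinear version of `lm`. -/
def lmBil : Module.Dual K C →ₗ[K] Module.Dual K D →ₗ[K] Module.Dual K (C ⊗[K] D) :=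
  LinearMap.mk₂ K (fun f g => lm K f g) (lm_add_left K) (lm_smul_left K)
    (lm_add_right K) (lm_smul_right K)

/-- `Dual C ⊗ Dual D → Dual (C ⊗ D)` as an algebra hom w.r.t. convolution. -/
def theta : Module.Dual K C ⊗[K] Module.Dual K D →ₐ[K] Module.Dual K (C ⊗[K] D) :=
  AlgHom.ofLinearMap (TensorProduct.lift (lmBil K))
    (by
      rw [Algebra.TensorProduct.one_def]
      show lm K (1 : Module.Dual K C) (1 : Module.Dual K D) = (1 : Module.Dual K (C ⊗[K] D))
      rw [dual_one_def, dual_one_def, dual_one_def]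
      apply TensorProduct.ext'
      intro c d
      simp [mul_comm])
    (by
      intro x y
      induction x with
      | zero => rw [zero_mul, LinearMap.map_zero, zero_mul]
      | add x x' hx hx' => simp only [add_mul, map_add, hx, hx']
      | tmul f g =>
          induction y with
          | zero => rw [mul_zero, LinearMap.map_zero, mul_zero]
          | add y y' hy hy' => simp only [mul_add, map_add, hy, hy']
          | tmul f' g' =>
              rw [Algebra.TensorProduct.tmul_mul_tmul]
              show lm K (f * f') (g * g') = (lm K f g) * (lm K f' g')
              rw [dual_mul_def, dual_mul_def, dual_mul_def]
              apply LinearMap.ext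
              intro w
              induction w with
              | zero => simp
              | add w w' hw hw' => simp only [map_add, hw, hw']
              | tmul c d =>
                  rw [cnv_apply, comulCD, lm4]
                  simp [cnv_apply])

@[simp] lemma theta_tmul (f : Module.Dual K C) (g : Module.Dual K D) :
    theta K (f ⊗ₜ[K] g) = lm K f g := rfl

end Theta

section PreMul

variable {A : Type} [Ring A] [Bialgebra K A]

lemma lm_mul_ttt (f g : Module.Dual K A) (s t : A ⊗[K] A) :
    lm K f g (s * t)
      = lm K (f ∘ₗ LinearMap.mul' K A) (g ∘ₗ LinearMap.mul' K A)
          (TensorProduct.tensorTensorTensorComm K A A A A (s ⊗ₜ[K] t)) := by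
  induction s with
  | zero => simp
  | tmul a b =>
      induction t with
      | zero => simp
      | tmul c d => simp [Algebra.TensorProduct.tmul_mul_tmul]
      | add y z hy hz => simp only [mul_add, tmul_add, map_add, hy, hz]
  | add y z hy hz => simp only [add_mul, add_tmul, map_add, hy, hz]

lemma cnv_precomp (f g : Module.Dual K A) :
    (cnv K f g) ∘ₗ LinearMap.mul' K A
      = cnv K (f ∘ₗ LinearMap.mul' K A) (g ∘ₗ LinearMap.mul' K A) := by
  apply TensorProduct.ext'
  intro c d
  show cnv K f g (c * d) = _
  rw [cnv_apply, Bialgebra.comul_mul, cnv_apply, comulCD, lm_mul_ttt]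

/-- precomposition with multiplication, as a linear map on duals -/
def preMul : Module.Dual K A →ₗ[K] Module.Dual K (A ⊗[K] A) where
  toFun f := f ∘ₗ LinearMap.mul' K A
  map_add' f g := LinearMap.add_comp _ _ _
  map_smul' r f := LinearMap.smul_comp _ _ _

lemma preMul_one : preMul K (1 : Module.Dual K A) = 1 := by
  show (Coalgebra.counit (R := K)) ∘ₗ LinearMap.mul' K A = Coalgebra.counit
  apply TensorProduct.ext'
  intro c d
  show Coalgebra.counit (R := K) (c * d) = _
  rw [Bialgebra.counit_mul]
  simp [mul_comm]

lemma preMul_mul (f g : Module.Dual K A) :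
    preMul K (f * g) = preMul K f * preMul K g := by
  show (cnv K f g) ∘ₗ LinearMap.mul' K A = cnv K _ _
  exact cnv_precomp K f g

end PreMul


section Per

/-- the degree-one functional `x ↦ B x ∘ π₁`. -/
def Dmap : U →ₗ[K] Module.Dual K (TensorAlgebra K V) where
  toFun x := (B x) ∘ₗ TAproj K V
  map_add' x x' := by ext c; simp
  map_smul' r x := by ext c; simp

/-- the pairing `T(U) → Dual T(V)` as an algebra hom into the convolution algebra. -/
def per : TensorAlgebra K U →ₐ[K] Module.Dual K (TensorAlgebra K V) :=
  TensorAlgebra.lift K (Dmap K U V B)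

@[simp] lemma per_ι (x : U) : per K U V B (TensorAlgebra.ι K x) = Dmap K U V B x :=
  TensorAlgebra.lift_ι_apply _ _

@[simp] lemma per_ι_ι (x : U) (y : V) :
    per K U V B (TensorAlgebra.ι K x) (TensorAlgebra.ι K y) = B x y := by
  simp [Dmap]

@[simp] lemma per_one_apply (c : TensorAlgebra K V) :
    per K U V B 1 c = TAcounit K V c := by
  rw [map_one]
  rfl

@[simp] lemma per_ι_one (x : U) : per K U V B (TensorAlgebra.ι K x) (1 : TensorAlgebra K V) = 0 := by
  simp [Dmap]

/-- `Φ₁`. -/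
def phi1 : TensorAlgebra K U →ₐ[K]
    Module.Dual K (TensorAlgebra K V ⊗[K] TensorAlgebra K V) :=
  AlgHom.ofLinearMap ((preMul K) ∘ₗ (per K U V B).toLinearMap)
    (by simp only [LinearMap.comp_apply, AlgHom.toLinearMap_apply, map_one, preMul_one])
    (by
      intro u u'
      simp only [LinearMap.comp_apply, AlgHom.toLinearMap_apply, map_mul, preMul_mul])

/-- `Φ₂`. -/
def phi2 : TensorAlgebra K U →ₐ[K]
    Module.Dual K (TensorAlgebra K V ⊗[K] TensorAlgebra K V) :=
  (theta K).comp ((Algebra.TensorProduct.map (per K U V B) (per K U V B)).comp (TAcomul K U))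

lemma phi_eq : phi1 K U V B = phi2 K U V B := by
  apply TensorAlgebra.hom_ext
  apply LinearMap.ext
  intro x
  simp only [LinearMap.comp_apply, AlgHom.toLinearMap_apply]
  show preMul K (per K U V B (TensorAlgebra.ι K x)) = phi2 K U V B (TensorAlgebra.ι K x)
  rw [phi2]
  simp only [AlgHom.comp_apply, TAcomul_ι, map_add, Algebra.TensorProduct.map_tmul, map_one,
    per_ι, theta_tmul]
  apply TensorProduct.ext'
  intro c d
  show Dmap K U V B x (c * d) = _
  simp only [Dmap, LinearMap.coe_mk, AddHom.coe_mk, LinearMap.comp_apply, TAproj_mul, map_add,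
    map_smul, LinearMap.add_apply, lm_tmul]
  show _ = (1 : Module.Dual K (TensorAlgebra K V)) c * (B x) (TAproj K V d)
      + (B x) (TAproj K V c) * (1 : Module.Dual K (TensorAlgebra K V)) d
  rw [dual_one_def]
  show TAcounit K V c • (B x) (TAproj K V d) + TAcounit K V d • (B x) (TAproj K V c)
      = TAcounit K V c * (B x) (TAproj K V d) + (B x) (TAproj K V c) * TAcounit K V d
  rw [smul_eq_mul, smul_eq_mul]
  ring

end Per

section Key

lemma theta_map_per (c d : TensorAlgebra K V) (s : TensorAlgebra K U ⊗[K] TensorAlgebra K U) :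
    theta K ((Algebra.TensorProduct.map (per K U V B) (per K U V B)) s) (c ⊗ₜ[K] d)
      = lm K ((per K U V B).toLinearMap.flip c) ((per K U V B).toLinearMap.flip d) s := by
  induction s with
  | zero => simp
  | tmul u u' => simp
  | add s s' hs hs' => simp only [map_add, LinearMap.add_apply, hs, hs']

lemma key3 (u : TensorAlgebra K U) (c d : TensorAlgebra K V) :
    per K U V B u (c * d)
      = lm K ((per K U V B).toLinearMap.flip c) ((per K U V B).toLinearMap.flip d)
          (TAcomul K U u) := by
  have h := congrArg (fun φ => φ u (c ⊗ₜ[K] d)) (phi_eq K U V B)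
  simp only [phi1, phi2, AlgHom.ofLinearMap_apply, AlgHom.comp_apply] at h
  rw [← theta_map_per]
  exact h

lemma key4 (u u' : TensorAlgebra K U) (c : TensorAlgebra K V) :
    per K U V B (u * u') c
      = lm K (per K U V B u) (per K U V B u') (TAcomul K V c) := by
  rw [map_mul, dual_mul_def, cnv_apply]
  rfl

end Key

section LpDef

/-- The Laplace pairing. -/
def Lp : (TensorAlgebra K U ⊗[K] TensorAlgebra K V) →ₗ[K]
    (TensorAlgebra K U ⊗[K] TensorAlgebra K V) →ₗ[K] K :=
  TensorProduct.lift (LinearMap.mk₂ K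
    (fun u v => lm K ((per K U V B).toLinearMap.flip v) (per K U V B u))
    (fun u u' v => by rw [map_add, lm_add_right])
    (fun r u v => by rw [map_smul, lm_smul_right])
    (fun u v v' => by rw [map_add, lm_add_left])
    (fun u r v => by rw [map_smul, lm_smul_left]))

lemma Lp_tmul (u u' : TensorAlgebra K U) (v v' : TensorAlgebra K V) :
    Lp K U V B (u ⊗ₜ[K] v) (u' ⊗ₜ[K] v') = per K U V B u' v * per K U V B u v' := rfl

lemma JTcomul_tmul (u : TensorAlgebra K U) (v : TensorAlgebra K V) :
    JTcomul K U V (u ⊗ₜ[K] v)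
      = TensorProduct.tensorTensorTensorComm K (TensorAlgebra K U) (TensorAlgebra K U)
          (TensorAlgebra K V) (TensorAlgebra K V) (TAcomul K U u ⊗ₜ[K] TAcomul K V v) := rfl

lemma split_aux (u₁ u₂ : TensorAlgebra K U) (v₁ v₂ : TensorAlgebra K V)
    (s : TensorAlgebra K U ⊗[K] TensorAlgebra K U)
    (t : TensorAlgebra K V ⊗[K] TensorAlgebra K V) :
    lm K ((Lp K U V B).flip (u₁ ⊗ₜ[K] v₁)) ((Lp K U V B).flip (u₂ ⊗ₜ[K] v₂))
        (TensorProduct.tensorTensorTensorComm K (TensorAlgebra K U) (TensorAlgebra K U)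
          (TensorAlgebra K V) (TensorAlgebra K V) (s ⊗ₜ[K] t))
      = lm K (per K U V B u₁) (per K U V B u₂) t
          * lm K ((per K U V B).toLinearMap.flip v₁) ((per K U V B).toLinearMap.flip v₂) s := by
  induction s with
  | zero => simp
  | add s s' hs hs' => simp only [add_tmul, map_add, hs, hs', mul_add]
  | tmul a a' =>
      induction t with
      | zero => simp
      | add t t' ht ht' => simp only [tmul_add, map_add, ht, ht', add_mul]
      | tmul b b' =>
          simp only [tensorTensorTensorComm_tmul, lm_tmul, LinearMap.flip_apply,
            LinearMap.coe_comp, AlgHom.toLinearMap_apply]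
          rw [Lp_tmul, Lp_tmul]
          show (per K U V B u₁ b * per K U V B a v₁) * (per K U V B u₂ b' * per K U V B a' v₂)
            = (per K U V B u₁ b * per K U V B u₂ b')
              * (per K U V B a v₁ * per K U V B a' v₂)
          ring

lemma Lp_split (a b c : TensorAlgebra K U ⊗[K] TensorAlgebra K V) :
    Lp K U V B a (b * c)
      = lm K ((Lp K U V B).flip b) ((Lp K U V B).flip c) (JTcomul K U V a) := by
  induction b with
  | zero => rw [zero_mul, map_zero, map_zero, lm_zero_left, LinearMap.zero_apply]
  | add b b' hb hb' =>
      rw [add_mul, map_add, map_add, lm_add_left, LinearMap.add_apply, hb, hb']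
  | tmul u₁ v₁ =>
      induction c with
      | zero => rw [mul_zero, map_zero, map_zero, lm_zero_right, LinearMap.zero_apply]
      | add c c' hc hc' =>
          rw [mul_add, map_add, map_add, lm_add_right, LinearMap.add_apply, hc, hc']
      | tmul u₂ v₂ =>
          induction a with
          | zero => simp
          | add a a' ha ha' => rw [map_add, map_add, map_add, LinearMap.add_apply, ha, ha']
          | tmul u v =>
              rw [Algebra.TensorProduct.tmul_mul_tmul, Lp_tmul, key3, key4,
                JTcomul_tmul, split_aux]

end LpDef

section Existence

lemma inclU_apply (u : TensorAlgebra K U) : inclU K U V u = u ⊗ₜ[K] 1 := rfl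
lemma inclV_apply (v : TensorAlgebra K V) : inclV K U V v = 1 ⊗ₜ[K] v := rfl
lemma JT_one : (1 : JT K U V) = (1 : TensorAlgebra K U) ⊗ₜ[K] (1 : TensorAlgebra K V) := rfl

lemma Lp_isLaplace : IsLaplacePairing K U V B (Lp K U V B) := by
  have hper11 : per K U V B 1 (1 : TensorAlgebra K V) = 1 := by
    rw [per_one_apply, map_one]
  have hperV : ∀ y : V, per K U V B 1 (TensorAlgebra.ι K y) = 0 := by
    intro y
    rw [per_one_apply, TAcounit_ι]
  constructor
  · -- symm
    intro a b
    induction a using TensorProduct.induction_on with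
    | zero => simp
    | add a a' ha ha' => simp only [map_add, LinearMap.add_apply, ha, ha']
    | tmul u v =>
        induction b using TensorProduct.induction_on with
        | zero => simp
        | add b b' hb hb' => simp only [map_add, LinearMap.add_apply, hb, hb']
        | tmul u' v' => rw [Lp_tmul, Lp_tmul, mul_comm]
  · -- split
    intro a b c
    exact Lp_split K U V B a b c
  · rw [JT_one, Lp_tmul, hper11, one_mul]
  · intro x y
    rw [inclU_apply, inclV_apply, Lp_tmul, per_ι_ι, hper11, mul_one]
  · intro x y
    rw [inclU_apply, inclV_apply, Lp_tmul, per_ι_ι, hper11, one_mul]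
  · intro x₁ x₂
    rw [inclU_apply, inclU_apply, Lp_tmul, per_ι_one, zero_mul]
  · intro y₁ y₂
    rw [inclV_apply, inclV_apply, Lp_tmul, hperV, zero_mul]
  · intro x
    rw [inclU_apply, JT_one, Lp_tmul, per_ι_one, mul_zero]
  · intro x
    rw [inclU_apply, JT_one, Lp_tmul, per_ι_one, zero_mul]
  · intro y
    rw [inclV_apply, JT_one, Lp_tmul, hperV, mul_zero]
  · intro y
    rw [inclV_apply, JT_one, Lp_tmul, hperV, zero_mul]

end Existence

section Uniqueness

lemma jt_induction {motive : JT K U V → Prop}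
    (algMap : ∀ r : K, motive (algebraMap K (JT K U V) r))
    (genU : ∀ x : U, motive (inclU K U V (TensorAlgebra.ι K x)))
    (genV : ∀ y : V, motive (inclV K U V (TensorAlgebra.ι K y)))
    (hadd : ∀ a b, motive a → motive b → motive (a + b))
    (hmul : ∀ a b, motive a → motive b → motive (a * b)) :
    ∀ a, motive a := by
  have hU : ∀ u : TensorAlgebra K U, motive (u ⊗ₜ[K] (1 : TensorAlgebra K V)) := by
    intro u
    induction u using TensorAlgebra.induction with
    | algebraMap r =>
        have h := algMap r
        rwa [Algebra.TensorProduct.algebraMap_apply] at h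
    | ι x => exact genU x
    | mul a b ha hb =>
        have h := hmul _ _ ha hb
        rwa [Algebra.TensorProduct.tmul_mul_tmul, one_mul] at h
    | add a b ha hb =>
        have h := hadd _ _ ha hb
        rwa [← add_tmul] at h
  have hV : ∀ v : TensorAlgebra K V, motive ((1 : TensorAlgebra K U) ⊗ₜ[K] v) := by
    intro v
    induction v using TensorAlgebra.induction with
    | algebraMap r =>
        have h := algMap r
        have e : algebraMap K (JT K U V) r
            = (1 : TensorAlgebra K U) ⊗ₜ[K] algebraMap K (TensorAlgebra K V) r := by
          rw [Algebra.algebraMap_eq_smul_one (A := TensorAlgebra K V), tmul_smul,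
            Algebra.algebraMap_eq_smul_one (A := JT K U V)]
          rfl
        rwa [e] at h
    | ι y => exact genV y
    | mul a b ha hb =>
        have h := hmul _ _ ha hb
        rwa [Algebra.TensorProduct.tmul_mul_tmul, one_mul] at h
    | add a b ha hb =>
        have h := hadd _ _ ha hb
        rwa [← tmul_add] at h
  intro a
  induction a using TensorProduct.induction_on with
  | zero =>
      have h := algMap 0
      rwa [map_zero] at h
  | tmul u v =>
      have h := hmul _ _ (hU u) (hV v)
      rwa [Algebra.TensorProduct.tmul_mul_tmul, one_mul, mul_one] at h
  | add a b ha hb => exact hadd _ _ ha hb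

lemma lm_def {C D : Type} [AddCommGroup C] [Module K C] [AddCommGroup D] [Module K D]
    (f : C →ₗ[K] K) (g : D →ₗ[K] K) :
    TensorProduct.lift ((LinearMap.mul K K).compl₁₂ f g) = lm K f g := rfl

lemma JTcomul_one : JTcomul K U V 1 = (1 : JT K U V) ⊗ₜ[K] (1 : JT K U V) := by
  rw [JT_one, JTcomul_tmul, map_one, map_one, Algebra.TensorProduct.one_def,
    Algebra.TensorProduct.one_def, tensorTensorTensorComm_tmul]

lemma JTcomul_genU (x : U) :
    JTcomul K U V (inclU K U V (TensorAlgebra.ι K x))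
      = inclU K U V (TensorAlgebra.ι K x) ⊗ₜ[K] (1 : JT K U V)
        + (1 : JT K U V) ⊗ₜ[K] inclU K U V (TensorAlgebra.ι K x) := by
  rw [inclU_apply, JTcomul_tmul, map_one, TAcomul_ι, Algebra.TensorProduct.one_def,
    add_tmul, map_add, tensorTensorTensorComm_tmul, tensorTensorTensorComm_tmul]
  rw [add_comm]
  rfl

lemma JTcomul_genV (y : V) :
    JTcomul K U V (inclV K U V (TensorAlgebra.ι K y))
      = inclV K U V (TensorAlgebra.ι K y) ⊗ₜ[K] (1 : JT K U V)
        + (1 : JT K U V) ⊗ₜ[K] inclV K U V (TensorAlgebra.ι K y) := by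
  rw [inclV_apply, JTcomul_tmul, map_one, TAcomul_ι, Algebra.TensorProduct.one_def,
    tmul_add, map_add, tensorTensorTensorComm_tmul, tensorTensorTensorComm_tmul]
  rw [add_comm]
  rfl

lemma laplace_unique (L1 L2 : JT K U V →ₗ[K] JT K U V →ₗ[K] K)
    (h1 : IsLaplacePairing K U V B L1) (h2 : IsLaplacePairing K U V B L2) : L1 = L2 := by
  have heps : ∀ b, L1 1 b = L2 1 b := by
    refine jt_induction K U V ?_ ?_ ?_ ?_ ?_
    · intro r
      rw [Algebra.algebraMap_eq_smul_one, map_smul, map_smul, h1.unit_unit, h2.unit_unit]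
    · intro x; rw [h1.one_u, h2.one_u]
    · intro y; rw [h1.one_v, h2.one_v]
    · intro a b ha hb; rw [map_add, map_add]; rw [ha, hb]
    · intro b c hb hc
      rw [h1.split, h2.split, JTcomul_one, lm_def, lm_def, lm_tmul, lm_tmul]
      simp only [LinearMap.flip_apply]
      rw [hb, hc]
  have hgU : ∀ x b, L1 (inclU K U V (TensorAlgebra.ι K x)) b
      = L2 (inclU K U V (TensorAlgebra.ι K x)) b := by
    intro x
    refine jt_induction K U V ?_ ?_ ?_ ?_ ?_
    · intro r
      rw [Algebra.algebraMap_eq_smul_one, map_smul, map_smul, h1.u_one, h2.u_one]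
    · intro x'; rw [h1.uu, h2.uu]
    · intro y; rw [h1.uv, h2.uv]
    · intro a b ha hb; rw [map_add, map_add, ha, hb]
    · intro b c hb hc
      rw [h1.split, h2.split, JTcomul_genU, lm_def, lm_def, map_add, map_add,
        lm_tmul, lm_tmul, lm_tmul, lm_tmul]
      simp only [LinearMap.flip_apply]
      rw [hb, hc, heps b, heps c]
  have hgV : ∀ y b, L1 (inclV K U V (TensorAlgebra.ι K y)) b
      = L2 (inclV K U V (TensorAlgebra.ι K y)) b := by
    intro y
    refine jt_induction K U V ?_ ?_ ?_ ?_ ?_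
    · intro r
      rw [Algebra.algebraMap_eq_smul_one, map_smul, map_smul, h1.v_one, h2.v_one]
    · intro x; rw [h1.symm, h2.symm, h1.uv, h2.uv]
    · intro y'; rw [h1.vv, h2.vv]
    · intro a b ha hb; rw [map_add, map_add, ha, hb]
    · intro b c hb hc
      rw [h1.split, h2.split, JTcomul_genV, lm_def, lm_def, map_add, map_add,
        lm_tmul, lm_tmul, lm_tmul, lm_tmul]
      simp only [LinearMap.flip_apply]
      rw [hb, hc, heps b, heps c]
  have main : ∀ b a, L1 a b = L2 a b := by
    refine jt_induction K U V ?_ ?_ ?_ ?_ ?_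
    · intro r a
      rw [Algebra.algebraMap_eq_smul_one, map_smul, map_smul, h1.symm, h2.symm, heps]
    · intro x a
      rw [h1.symm, h2.symm, hgU]
    · intro y a
      rw [h1.symm, h2.symm, hgV]
    · intro b c hb hc a
      rw [map_add, map_add, hb, hc]
    · intro b c hb hc a
      have e1 : L1.flip b = L2.flip b := LinearMap.ext fun a => hb a
      have e2 : L1.flip c = L2.flip c := LinearMap.ext fun a => hc a
      rw [h1.split, h2.split, e1, e2]
  exact LinearMap.ext fun a => LinearMap.ext fun b => main b a

end Uniqueness

theorem statement0 :
    (∃! Lp : JT K U V →ₗ[K] JT K U V →ₗ[K] K, IsLaplacePairing K U V B Lp) ∧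
      ∀ Lp : JT K U V →ₗ[K] JT K U V →ₗ[K] K, IsLaplacePairing K U V B Lp →
        ∀ a b, Lp a b = Lp b a := by
  refine ⟨⟨Lp K U V B, Lp_isLaplace K U V B, fun L' h' =>
    laplace_unique K U V B L' (Lp K U V B) h' (Lp_isLaplace K U V B)⟩,
    fun L h => h.symm⟩

end
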